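/- Let E = ℝ^d with the Euclidean inner product, let X : E → E be continuous, and let φ : ℝ × E → E be continuously differentiable with ∂φ/∂s(s,y) = X(φ(s,y)) for all (s,y). Fix x₀ ∈ E with X(x₀) ≠ 0 and t₀ ∈ ℝ, set z = φ(t₀, x₀), and assume X(z) ≠ 0. Let N₀ = x₀ + X(x₀)^⊥ be the affine orthogonal section through x₀, and let τ : N₀ → ℝ be a function differentiable (within N₀) at x₀ with τ(x₀) = t₀. Define the Poincaré map P(y) = φ(τ(y), y) for y ∈ N₀, and assume there is a neighborhood U of x₀ in N₀ with P(y) ∈ z + X(z)^⊥ for all y ∈ U. Then for every vector v ∈ X(x₀)^⊥, the derivative of P within N₀ at x₀ satisfies D P(x₀)(v) = D_y φ(t₀, ·)(x₀)(v) + (Dτ(x₀)(v))·X(z), and consequently D P(x₀)(v) equals the orthogonal projection onto X(z)^⊥ of D_y φ(t₀, ·)(x₀)(v). In other words, the derivative of the Poincaré map equals the linear Poincaré map. -/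

import Mathlib

open Submodule Set Filter Topology

/-- Directions in a submodule are tangent directions to the affine translate. -/
lemma mem_tangentCone_affine {E : Type*} [NormedAddCommGroup E] [NormedSpace ℝ E]
    (K : Submodule ℝ E) (x₀ : E) {v : E} (hv : v ∈ K) :
    v ∈ tangentConeAt ℝ {y | y - x₀ ∈ K} x₀ := by
  refine mem_tangentConeAt_of_seq atTop (fun n : ℕ => (n : ℝ)) (fun n => (n : ℝ)⁻¹ • v) ?_ ?_ ?_
  swap
  · filter_upwards with n
    simp only [Set.mem_setOf_eq, add_sub_cancel_left]
    exact K.smul_mem _ hv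
  · simpa using (tendsto_inv_atTop_nhds_zero_nat (𝕜 := ℝ)).smul_const v
  · have : ∀ᶠ n : ℕ in atTop, (n : ℝ) • ((n : ℝ)⁻¹ • v) = v := by
      filter_upwards [eventually_ge_atTop 1] with n hn
      have : (n : ℝ) ≠ 0 := by positivity
      rw [smul_smul, mul_inv_cancel₀ this, one_smul]
    exact Tendsto.congr' (this.mono fun n h => h.symm) tendsto_const_nhds

/-- The tangent cone to a subset of a closed submodule is contained in the submodule. -/
lemma tangentCone_subset_of_subset' {E : Type*} [NormedAddCommGroup E] [NormedSpace ℝ E]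
    (K : Submodule ℝ E) (hK : IsClosed (K : Set E)) {t : Set E} (ht : t ⊆ K) {x : E}
    (hx : x ∈ K) : tangentConeAt ℝ t x ⊆ K := by
  rintro w hw
  obtain ⟨α, l, hl, c, d, hd0, dtop, cdlim⟩ := exists_fun_of_mem_tangentConeAt hw
  have hmem : ∀ᶠ n in l, c n • d n ∈ K := by
    filter_upwards [dtop] with n hn
    have hd : d n ∈ K := by
      have := ht hn
      simpa using K.sub_mem this hx
    exact K.smul_mem _ hd
  exact hK.mem_of_tendsto cdlim hmem

theorem poincare_map_derivative {d : ℕ} (hd : 1 ≤ d)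
    (X : EuclideanSpace ℝ (Fin d) → EuclideanSpace ℝ (Fin d)) (hX : Continuous X)
    (φ : ℝ → EuclideanSpace ℝ (Fin d) → EuclideanSpace ℝ (Fin d))
    (hφ : ContDiff ℝ 1 (fun p : ℝ × EuclideanSpace ℝ (Fin d) => φ p.1 p.2))
    (hflow : ∀ (s : ℝ) (y : EuclideanSpace ℝ (Fin d)),
      HasDerivAt (fun s : ℝ => φ s y) (X (φ s y)) s)
    (x₀ : EuclideanSpace ℝ (Fin d)) (hX₀ : X x₀ ≠ 0) (t₀ : ℝ)
    (z : EuclideanSpace ℝ (Fin d)) (hz : z = φ t₀ x₀) (hXz : X z ≠ 0)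
    (τ : EuclideanSpace ℝ (Fin d) → ℝ) (hτ₀ : τ x₀ = t₀)
    (Dτ : EuclideanSpace ℝ (Fin d) →L[ℝ] ℝ)
    (hτ : HasFDerivWithinAt τ Dτ {y | y - x₀ ∈ (ℝ ∙ X x₀)ᗮ} x₀)
    (Dφt : EuclideanSpace ℝ (Fin d) →L[ℝ] EuclideanSpace ℝ (Fin d))
    (hDφt : HasFDerivAt (fun y => φ t₀ y) Dφt x₀)
    (U : Set (EuclideanSpace ℝ (Fin d)))
    (hU : U ∈ nhdsWithin x₀ {y | y - x₀ ∈ (ℝ ∙ X x₀)ᗮ})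
    (hP : ∀ y ∈ U, φ (τ y) y - z ∈ (ℝ ∙ X z)ᗮ) :
    ∃ L : EuclideanSpace ℝ (Fin d) →L[ℝ] EuclideanSpace ℝ (Fin d),
      HasFDerivWithinAt (fun y => φ (τ y) y) L {y | y - x₀ ∈ (ℝ ∙ X x₀)ᗮ} x₀ ∧
      ∀ v ∈ (ℝ ∙ X x₀)ᗮ,
        L v = Dφt v + Dτ v • X z ∧
        L v = (orthogonalProjection (ℝ ∙ X z)ᗮ (Dφt v) : EuclideanSpace ℝ (Fin d)) := by
  set s : Set (EuclideanSpace ℝ (Fin d)) := {y | y - x₀ ∈ (ℝ ∙ X x₀)ᗮ} with hs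
  set F : ℝ × EuclideanSpace ℝ (Fin d) → EuclideanSpace ℝ (Fin d) := fun p => φ p.1 p.2 with hF
  -- full derivative of F at (t₀, x₀)
  have hFdiff : DifferentiableAt ℝ F (t₀, x₀) :=
    (hφ.differentiable one_ne_zero).differentiableAt
  set DF : ℝ × EuclideanSpace ℝ (Fin d) →L[ℝ] EuclideanSpace ℝ (Fin d) := fderiv ℝ F (t₀, x₀) with hDF
  have hFderiv : HasFDerivAt F DF (t₀, x₀) := hFdiff.hasFDerivAt
  -- partial derivative in time
  have h1 : DF (1, 0) = X z := by
    have h1' : HasDerivAt (fun s : ℝ => F (s, x₀)) (DF (1, 0)) t₀ := by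
      have := hFderiv.comp t₀ ((hasDerivAt_id t₀).prodMk (hasDerivAt_const t₀ x₀))
      have h := this.hasDerivAt
      simp only [ContinuousLinearMap.comp_apply, ContinuousLinearMap.toSpanSingleton_apply, one_smul] at h
      exact h
    have h2' : HasDerivAt (fun s : ℝ => F (s, x₀)) (X (φ t₀ x₀)) t₀ := hflow t₀ x₀
    rw [hz]
    exact h1'.unique h2'
  -- partial derivative in space
  have h2 : ∀ v : EuclideanSpace ℝ (Fin d), DF (0, v) = Dφt v := by
    intro v
    have h1' : HasFDerivAt (fun y : EuclideanSpace ℝ (Fin d) => F (t₀, y))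
        (DF.comp (ContinuousLinearMap.inr ℝ ℝ (EuclideanSpace ℝ (Fin d)))) x₀ :=
      hFderiv.comp x₀ ((hasFDerivAt_const t₀ x₀).prodMk (hasFDerivAt_id x₀))
    have := h1'.unique hDφt
    calc DF (0, v) = (DF.comp (ContinuousLinearMap.inr ℝ ℝ (EuclideanSpace ℝ (Fin d)))) v := rfl
      _ = Dφt v := by rw [this]
  set G : EuclideanSpace ℝ (Fin d) →L[ℝ] ℝ × EuclideanSpace ℝ (Fin d) := Dτ.prod (ContinuousLinearMap.id ℝ (EuclideanSpace ℝ (Fin d))) with hG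
  set L : EuclideanSpace ℝ (Fin d) →L[ℝ] EuclideanSpace ℝ (Fin d) := DF.comp G with hL
  have hLv : ∀ v : EuclideanSpace ℝ (Fin d), L v = Dφt v + Dτ v • X z := by
    intro v
    have : (Dτ v, v) = (Dτ v) • ((1 : ℝ), (0 : EuclideanSpace ℝ (Fin d))) + ((0 : ℝ), v) := by
      simp [Prod.ext_iff]
    calc L v = DF (Dτ v, v) := rfl
      _ = Dτ v • DF (1, 0) + DF (0, v) := by rw [this, map_add, map_smul]
      _ = Dφt v + Dτ v • X z := by rw [h1, h2]; exact add_comm _ _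
  -- the derivative statement
  have hGx : HasFDerivWithinAt (fun y : EuclideanSpace ℝ (Fin d) => (τ y, y)) G s x₀ :=
    hτ.prodMk (hasFDerivWithinAt_id x₀ s)
  have hPx : HasFDerivWithinAt (fun y => φ (τ y) y) L s x₀ := by
    have : HasFDerivAt F DF (τ x₀, x₀) := by rw [hτ₀]; exact hFderiv
    have h3 := HasFDerivAt.comp_hasFDerivWithinAt (f := fun y => (τ y, y)) x₀ this hGx
    exact h3
  refine ⟨L, hPx, fun v hv => ?_⟩
  refine ⟨hLv v, ?_⟩
  -- show L v ∈ (ℝ ∙ X z)ᗮ via the tangent cone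
  obtain ⟨V, hVopen, hVx, hVs⟩ := mem_nhdsWithin.1 hU
  set h : EuclideanSpace ℝ (Fin d) → EuclideanSpace ℝ (Fin d) := fun y => φ (τ y) y - z with hh
  have hhx₀ : h x₀ = 0 := by simp [hh, hτ₀, ← hz]
  have hhderiv : HasFDerivWithinAt h L (s ∩ V) x₀ := by
    exact (hPx.mono (Set.inter_subset_left : s ∩ V ⊆ s)).sub_const z
  have himg : h '' (s ∩ V) ⊆ ((ℝ ∙ X z)ᗮ : Set (EuclideanSpace ℝ (Fin d))) := by
    rintro w ⟨y, hy, rfl⟩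
    exact hP y (hVs ⟨hy.2, hy.1⟩)
  have hvt : v ∈ tangentConeAt ℝ (s ∩ V) x₀ := by
    rw [tangentConeAt_inter_nhds (hVopen.mem_nhds hVx)]
    exact mem_tangentCone_affine _ x₀ hv
  have hLvmem : L v ∈ (ℝ ∙ X z)ᗮ := by
    have := hhderiv.mapsTo_tangent_cone hvt
    rw [hhx₀] at this
    exact tangentCone_subset_of_subset' _ (Submodule.closed_of_finiteDimensional _) himg
      (Submodule.zero_mem _) this
  -- conclude with the orthogonal projection
  have hDφ : Dφt v = L v - Dτ v • X z := by rw [hLv v]; abel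
  have hproj0 : (orthogonalProjection (ℝ ∙ X z)ᗮ (Dτ v • X z) : EuclideanSpace ℝ (Fin d)) = 0 := by
    have hmem : Dτ v • X z ∈ ((ℝ ∙ X z)ᗮ)ᗮ :=
      Submodule.le_orthogonal_orthogonal _
        (Submodule.smul_mem _ _ (Submodule.mem_span_singleton_self _))
    rw [orthogonalProjection_mem_subspace_orthogonalComplement_eq_zero hmem]
    simp
  have hprojL : (orthogonalProjection (ℝ ∙ X z)ᗮ (L v) : EuclideanSpace ℝ (Fin d)) = L v :=
    Submodule.starProjection_eq_self_iff.2 hLvmem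
  rw [hDφ, map_sub]
  push_cast
  rw [hprojL, hproj0, sub_zero]
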